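/- Let U be a finite-dimensional gl_n(ℂ)-module and β ∈ ℂ^n. Define an action of W_n on T(U,β) = ⊕_{s ∈ β+ℤ^n} ℂ t^s ⊗ U by (t^m d_a)(t^s ⊗ u) = s_a t^{s+m} ⊗ u + Σ_{p=1}^n m_p t^{s+m} ⊗ E_{pa} u. Then this defines a W_n-module structure: the commutator of the actions of t^m d_a and t^r d_b equals the action of [t^m d_a, t^r d_b] = r_a t^{m+r} d_b - m_b t^{m+r} d_a. -/

import Mathlib

attribute [local instance 100] LieRing.ofAssociativeRing

def EMat (n : ℕ) (m : Fin n → ℤ) (a : Fin n) : Matrix (Fin n) (Fin n) ℂ :=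
  fun p q => if q = a then (m p : ℂ) else 0

lemma EMat_mul (n : ℕ) (m r : Fin n → ℤ) (a b : Fin n) :
    EMat n m a * EMat n r b = (r a : ℂ) • EMat n m b := by
  ext p q
  simp only [EMat, Matrix.mul_apply, Matrix.smul_apply, smul_eq_mul, ite_mul, mul_ite,
    mul_zero, zero_mul]
  by_cases h : q = b <;> simp [h, mul_comm]

lemma EMat_add (n : ℕ) (m r : Fin n → ℤ) (a : Fin n) :
    EMat n (m + r) a = EMat n m a + EMat n r a := by
  ext p q
  simp only [EMat, Matrix.add_apply, Pi.add_apply, Int.cast_add]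
  split <;> simp

noncomputable def tact {n : ℕ} {U : Type*} [AddCommGroup U] [Module ℂ U]
    (β : Fin n → ℂ) (ρ : Matrix (Fin n) (Fin n) ℂ →ₗ⁅ℂ⁆ Module.End ℂ U)
    (m : Fin n → ℤ) (a : Fin n) :
    ((Fin n → ℤ) →₀ U) →ₗ[ℂ] ((Fin n → ℤ) →₀ U) :=
  Finsupp.lsum ℂ fun sI =>
    Finsupp.lsingle (sI + m) ∘ₗ ((β a + (sI a : ℂ)) • LinearMap.id + ρ (EMat n m a))

lemma tact_single {n : ℕ} {U : Type*} [AddCommGroup U] [Module ℂ U]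
    (β : Fin n → ℂ) (ρ : Matrix (Fin n) (Fin n) ℂ →ₗ⁅ℂ⁆ Module.End ℂ U)
    (m : Fin n → ℤ) (a : Fin n) (s : Fin n → ℤ) (u : U) :
    tact β ρ m a (Finsupp.single s u)
      = Finsupp.single (s + m) ((β a + (s a : ℂ)) • u + ρ (EMat n m a) u) := by
  simp [tact]

theorem tensor_fields_module_structure {n : ℕ} {U : Type*} [AddCommGroup U] [Module ℂ U]
    [FiniteDimensional ℂ U] (β : Fin n → ℂ)
    (ρ : Matrix (Fin n) (Fin n) ℂ →ₗ⁅ℂ⁆ Module.End ℂ U)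
    (m r : Fin n → ℤ) (a b : Fin n) :
    tact β ρ m a ∘ₗ tact β ρ r b - tact β ρ r b ∘ₗ tact β ρ m a
      = (r a : ℂ) • tact β ρ (m + r) b - (m b : ℂ) • tact β ρ (m + r) a := by
  refine Finsupp.lhom_ext fun s u => ?_
  have hcomm : ρ (EMat n m a) (ρ (EMat n r b) u) - ρ (EMat n r b) (ρ (EMat n m a) u)
      = (r a : ℂ) • ρ (EMat n m b) u - (m b : ℂ) • ρ (EMat n r a) u := by
    have := ρ.map_lie (x := EMat n m a) (y := EMat n r b)
    have h2 : ⁅EMat n m a, EMat n r b⁆ = (r a : ℂ) • EMat n m b - (m b : ℂ) • EMat n r a := by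
      rw [Ring.lie_def, EMat_mul, EMat_mul]
    rw [h2] at this
    have := congrArg (fun f => f u) this
    simpa [Module.End.lie_apply, sub_smul] using this.symm
  simp only [LinearMap.sub_apply, LinearMap.comp_apply, LinearMap.smul_apply,
    tact_single, Finsupp.smul_single, EMat_add, map_add]
  rw [show s + r + m = s + (m + r) by abel, show s + m + r = s + (m + r) by abel,
    ← Finsupp.single_sub, ← Finsupp.single_sub]
  congr 1
  simp only [map_add, map_smul, smul_add, smul_sub, LinearMap.add_apply, smul_smul,
    Pi.add_apply, Int.cast_add, map_add, LinearMap.add_apply]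
  rw [show ((ρ) (EMat n m a)) ((ρ (EMat n r b)) u) = ρ (EMat n r b) (ρ (EMat n m a) u) + ((r a : ℂ) • ρ (EMat n m b) u - (m b : ℂ) • ρ (EMat n r a) u) by rw [← hcomm]; abel]
  module
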